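/- Let a, b be real numbers, and let p_1, p_2 be real polynomials with deg p_1 ≤ deg p_2 − 2 and p_2 having positive leading coefficient. Then lim_{m→∞} ∏_{k=1}^{m} (1 + a/m + bk/m² + p_1(k)/p_2(m)) = e^{a + b/2}. -/

import Mathlib

open Filter Finset Polynomial

lemma poly_bound (p : Polynomial ℝ) : ∃ C : ℝ, 0 < C ∧ ∀ x : ℝ, 1 ≤ x → |p.eval x| ≤ C * x ^ p.natDegree := by
  refine ⟨∑ i ∈ Finset.range (p.natDegree + 1), |p.coeff i| + 1, by positivity, fun x hx => ?_⟩
  rw [Polynomial.eval_eq_sum_range]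
  calc |∑ i ∈ Finset.range (p.natDegree+1), p.coeff i * x ^ i|
      ≤ ∑ i ∈ Finset.range (p.natDegree+1), |p.coeff i * x ^ i| := Finset.abs_sum_le_sum_abs _ _
    _ ≤ ∑ i ∈ Finset.range (p.natDegree+1), |p.coeff i| * x ^ p.natDegree := by
        apply Finset.sum_le_sum; intro i hi
        rw [abs_mul, abs_pow, abs_of_nonneg (by linarith : (0:ℝ) ≤ x)]
        exact mul_le_mul_of_nonneg_left (pow_le_pow_right₀ hx (Nat.lt_succ_iff.mp (Finset.mem_range.mp hi))) (abs_nonneg _)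
    _ ≤ _ := by rw [← Finset.sum_mul]; apply mul_le_mul_of_nonneg_right (by linarith) (by positivity)

lemma gauss_real (m : ℕ) : ∑ k ∈ Finset.Icc 1 m, (k:ℝ) = m*(m+1)/2 := by
  induction m with
  | zero => simp
  | succ n ih =>
    rw [Finset.sum_Icc_succ_top (by omega), ih]
    push_cast; ring

lemma log_bounds {t : ℝ} (ht : |t| ≤ 1/2) : t - 2*t^2 ≤ Real.log (1+t) ∧ Real.log (1+t) ≤ t := by
  rw [abs_le] at ht
  have h1 : (0:ℝ) < 1 + t := by linarith
  constructor
  · have h2 : Real.log (1+t)⁻¹ ≤ (1+t)⁻¹ - 1 := Real.log_le_sub_one_of_pos (by positivity)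
    rw [Real.log_inv] at h2
    have h3 : (1 - (1+t)⁻¹) - (t - 2*t^2) = t^2*(1+2*t)/(1+t) := by
      field_simp; ring
    nlinarith [sq_nonneg t, div_nonneg (mul_nonneg (sq_nonneg t) (by linarith : (0:ℝ) ≤ 1+2*t)) h1.le]
  · have := Real.log_le_sub_one_of_pos h1; linarith

lemma poly_lower (p : Polynomial ℝ) (hlead : 0 < p.leadingCoeff) :
    ∀ᶠ m : ℕ in atTop, p.leadingCoeff/2 * (m:ℝ) ^ p.natDegree ≤ p.eval (m:ℝ) := by
  have hequiv := Polynomial.isEquivalent_atTop_lead p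
  have h1 : ∀ᶠ x : ℝ in atTop, ‖eval x p - p.leadingCoeff * x ^ p.natDegree‖ ≤ 1/2 * ‖p.leadingCoeff * x ^ p.natDegree‖ := hequiv.def (by norm_num : (0:ℝ) < 1/2)
  have h2 : ∀ᶠ x : ℝ in atTop, p.leadingCoeff/2 * x ^ p.natDegree ≤ p.eval x := by
    filter_upwards [h1, eventually_ge_atTop (0:ℝ)] with x hx hx0
    have hpow : (0:ℝ) ≤ x ^ p.natDegree := by positivity
    rw [Real.norm_eq_abs, Real.norm_eq_abs,
      abs_of_nonneg (mul_nonneg hlead.le hpow)] at hx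
    have h := abs_le.mp hx
    nlinarith [h.1, h.2]
  exact (tendsto_natCast_atTop_atTop (R := ℝ)).eventually h2

theorem stmt_11 (a b : ℝ) (p₁ p₂ : Polynomial ℝ)
    (hdeg : p₁.natDegree + 2 ≤ p₂.natDegree) (hlead : 0 < p₂.leadingCoeff) :
    Tendsto (fun m : ℕ =>
        ∏ k ∈ Finset.Icc 1 m,
          (1 + a / m + b * k / (m : ℝ) ^ 2 + p₁.eval (k : ℝ) / p₂.eval (m : ℝ)))
      atTop (nhds (Real.exp (a + b / 2))) := by
  obtain ⟨C₁, hC₁pos, hC₁⟩ := poly_bound p₁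
  set L := p₂.leadingCoeff with hLdef
  set d₁ := p₁.natDegree with hd₁
  set d₂ := p₂.natDegree with hd₂
  set C : ℝ := |a| + |b| + 2*C₁/L with hCdef
  have hCpos : 0 < C := by positivity
  set x : ℕ → ℕ → ℝ := fun m k => a/m + b*k/(m:ℝ)^2 + p₁.eval (k:ℝ) / p₂.eval (m:ℝ) with hx
  have hdiv : ∀ c : ℝ, Tendsto (fun m : ℕ => c / m) atTop (nhds 0) := fun c =>
    tendsto_const_nhds.div_atTop tendsto_natCast_atTop_atTop
  have hhalf : ∀ᶠ m : ℕ in atTop, C / m ≤ 1/2 :=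
    ((hdiv C).eventually_lt_const (by norm_num)).mono fun m h => h.le
  -- uniform bound on x
  have hE : ∀ᶠ m : ℕ in atTop, ∀ k ∈ Finset.Icc 1 m, |x m k| ≤ C / m := by
    filter_upwards [poly_lower p₂ hlead, eventually_ge_atTop 1] with m hp₂ hm1
    intro k hk
    obtain ⟨hk1, hkm⟩ := Finset.mem_Icc.mp hk
    have hm0 : (0:ℝ) < m := by exact_mod_cast Nat.lt_of_lt_of_le Nat.zero_lt_one hm1
    have hmR1 : (1:ℝ) ≤ m := by exact_mod_cast hm1
    have hkR1 : (1:ℝ) ≤ k := by exact_mod_cast hk1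
    have hkRm : (k:ℝ) ≤ m := by exact_mod_cast hkm
    have hply : (0:ℝ) < L/2 * (m:ℝ)^d₂ := by positivity
    have hp₂pos : (0:ℝ) < p₂.eval (m:ℝ) := lt_of_lt_of_le hply hp₂
    have h1 : |a / m| ≤ |a| / m := by rw [abs_div, abs_of_pos hm0]
    have h2 : |b * k / (m:ℝ)^2| ≤ |b| / m := by
      rw [abs_div, abs_mul, abs_of_nonneg (by positivity : (0:ℝ) ≤ (k:ℝ)),
        abs_of_nonneg (by positivity : (0:ℝ) ≤ (m:ℝ)^2)]
      rw [div_le_div_iff₀ (by positivity) hm0]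
      nlinarith [mul_le_mul_of_nonneg_right (mul_le_mul_of_nonneg_left hkRm (abs_nonneg b)) hm0.le]
    have h3 : |p₁.eval (k:ℝ) / p₂.eval (m:ℝ)| ≤ 2*C₁/L / m := by
      have hnum : |p₁.eval (k:ℝ)| ≤ C₁ * (m:ℝ)^d₁ := le_trans (hC₁ k hkR1)
        (mul_le_mul_of_nonneg_left (pow_le_pow_left₀ (by positivity) hkRm d₁) hC₁pos.le)
      have hden : L/2 * ((m:ℝ)^d₁ * m) ≤ p₂.eval (m:ℝ) := by
        refine le_trans ?_ hp₂
        have hpp : (m:ℝ)^(d₁+1) ≤ (m:ℝ)^d₂ := pow_le_pow_right₀ hmR1 (by omega)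
        rw [pow_succ] at hpp
        nlinarith
      rw [abs_div, abs_of_pos hp₂pos]
      calc |p₁.eval (k:ℝ)| / p₂.eval (m:ℝ) ≤ (C₁ * (m:ℝ)^d₁) / (L/2 * ((m:ℝ)^d₁ * m)) :=
            div_le_div₀ (by positivity) hnum (by positivity) hden
        _ = 2*C₁/L/m := by field_simp
    calc |x m k| ≤ |a/m| + |b * k / (m:ℝ)^2| + |p₁.eval (k:ℝ) / p₂.eval (m:ℝ)| := by
          simp only [hx]; exact abs_add_three _ _ _
      _ ≤ |a|/m + |b|/m + 2*C₁/L/m := by gcongr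
      _ = C/m := by rw [hCdef]; field_simp
  -- S closed form
  have hSclosed : ∀ᶠ m : ℕ in atTop,
      ∑ k ∈ Finset.Icc 1 m, x m k
        = a + b*(m+1)/(2*m) + (∑ k ∈ Finset.Icc 1 m, p₁.eval (k:ℝ))/p₂.eval (m:ℝ) := by
    filter_upwards [eventually_ge_atTop 1] with m hm1
    have hm0 : (0:ℝ) < m := by exact_mod_cast Nat.lt_of_lt_of_le Nat.zero_lt_one hm1
    simp only [hx]
    rw [Finset.sum_add_distrib, Finset.sum_add_distrib]
    have e1 : ∑ _k ∈ Finset.Icc 1 m, a/(m:ℝ) = a := by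
      rw [Finset.sum_const, Nat.card_Icc, nsmul_eq_mul]
      push_cast [Nat.add_sub_cancel]
      field_simp
    have e2 : ∑ k ∈ Finset.Icc 1 m, b*(k:ℝ)/(m:ℝ)^2 = b*((m:ℝ)+1)/(2*m) := by
      rw [← Finset.sum_div, ← Finset.mul_sum, gauss_real]
      field_simp
    have e3 : ∑ k ∈ Finset.Icc 1 m, p₁.eval (k:ℝ)/p₂.eval (m:ℝ)
        = (∑ k ∈ Finset.Icc 1 m, p₁.eval (k:ℝ))/p₂.eval (m:ℝ) := (Finset.sum_div _ _ _).symm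
    rw [e1, e2, e3]
  -- limits of each piece
  have hT2 : Tendsto (fun m : ℕ => a + b*((m:ℝ)+1)/(2*m)) atTop (nhds (a + b/2)) := by
    have base : Tendsto (fun m : ℕ => a + (b/2 + b/2 * (1/(m:ℝ)))) atTop (nhds (a + (b/2 + b/2 * 0))) :=
      tendsto_const_nhds.add (tendsto_const_nhds.add (tendsto_const_nhds.mul tendsto_one_div_atTop_nhds_zero_nat))
    rw [mul_zero, add_zero] at base
    refine Tendsto.congr' ?_ base
    filter_upwards [eventually_ge_atTop 1] with m hm1
    have hm0 : (0:ℝ) < m := by exact_mod_cast Nat.lt_of_lt_of_le Nat.zero_lt_one hm1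
    field_simp
  have hT3 : Tendsto (fun m : ℕ => (∑ k ∈ Finset.Icc 1 m, p₁.eval (k:ℝ))/p₂.eval (m:ℝ)) atTop (nhds 0) := by
    refine squeeze_zero_norm' ?_ (hdiv (2*C₁/L))
    filter_upwards [poly_lower p₂ hlead, eventually_ge_atTop 1] with m hp₂ hm1
    have hm0 : (0:ℝ) < m := by exact_mod_cast Nat.lt_of_lt_of_le Nat.zero_lt_one hm1
    have hmR1 : (1:ℝ) ≤ m := by exact_mod_cast hm1
    have hply : (0:ℝ) < L/2 * (m:ℝ)^d₂ := by positivity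
    have hp₂pos : (0:ℝ) < p₂.eval (m:ℝ) := lt_of_lt_of_le hply hp₂
    have hnum : |∑ k ∈ Finset.Icc 1 m, p₁.eval (k:ℝ)| ≤ (m:ℝ) * (C₁ * (m:ℝ)^d₁) := by
      refine (Finset.abs_sum_le_sum_abs _ _).trans ?_
      have : ∀ k ∈ Finset.Icc 1 m, |p₁.eval (k:ℝ)| ≤ C₁ * (m:ℝ)^d₁ := by
        intro k hk
        obtain ⟨hk1, hkm⟩ := Finset.mem_Icc.mp hk
        exact le_trans (hC₁ k (by exact_mod_cast hk1))
          (mul_le_mul_of_nonneg_left (pow_le_pow_left₀ (by positivity) (by exact_mod_cast hkm) d₁) hC₁pos.le)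
      refine (Finset.sum_le_sum this).trans ?_
      rw [Finset.sum_const, Nat.card_Icc, nsmul_eq_mul]
      push_cast [Nat.add_sub_cancel]
      exact le_rfl
    have hden : L/2 * ((m:ℝ)^d₁ * m * m) ≤ p₂.eval (m:ℝ) := by
      refine le_trans ?_ hp₂
      have hpp : (m:ℝ)^(d₁+2) ≤ (m:ℝ)^d₂ := pow_le_pow_right₀ hmR1 (by omega)
      rw [pow_succ, pow_succ] at hpp
      nlinarith
    rw [Real.norm_eq_abs, abs_div, abs_of_pos hp₂pos]
    calc |∑ k ∈ Finset.Icc 1 m, p₁.eval (k:ℝ)| / p₂.eval (m:ℝ)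
        ≤ ((m:ℝ) * (C₁ * (m:ℝ)^d₁)) / (L/2 * ((m:ℝ)^d₁ * m * m)) :=
          div_le_div₀ (by positivity) hnum (by positivity) hden
      _ = 2*C₁/L/m := by field_simp
  have hS : Tendsto (fun m : ℕ => ∑ k ∈ Finset.Icc 1 m, x m k) atTop (nhds (a + b/2)) := by
    have := hT2.add hT3
    rw [add_zero] at this
    exact Tendsto.congr' (EventuallyEq.symm hSclosed) this
  -- Q limit
  have hQ : Tendsto (fun m : ℕ => ∑ k ∈ Finset.Icc 1 m, (x m k)^2) atTop (nhds 0) := by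
    refine squeeze_zero_norm' ?_ (hdiv (C^2))
    filter_upwards [hE, eventually_ge_atTop 1] with m hEm hm1
    have hm0 : (0:ℝ) < m := by exact_mod_cast Nat.lt_of_lt_of_le Nat.zero_lt_one hm1
    rw [Real.norm_eq_abs, abs_of_nonneg (Finset.sum_nonneg fun k _ => sq_nonneg _)]
    calc ∑ k ∈ Finset.Icc 1 m, (x m k)^2 ≤ ∑ k ∈ Finset.Icc 1 m, (C/m)^2 := by
          apply Finset.sum_le_sum
          intro k hk
          rw [← sq_abs]
          exact pow_le_pow_left₀ (abs_nonneg _) (hEm k hk) 2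
      _ = C^2/m := by
          rw [Finset.sum_const, Nat.card_Icc, nsmul_eq_mul]
          push_cast [Nat.add_sub_cancel]
          field_simp
  -- log sum squeeze
  have hGb : ∀ᶠ m : ℕ in atTop,
      ((∑ k ∈ Finset.Icc 1 m, x m k) - 2 * ∑ k ∈ Finset.Icc 1 m, (x m k)^2
        ≤ ∑ k ∈ Finset.Icc 1 m, Real.log (1 + x m k))
      ∧ (∑ k ∈ Finset.Icc 1 m, Real.log (1 + x m k) ≤ ∑ k ∈ Finset.Icc 1 m, x m k) := by
    filter_upwards [hE, hhalf] with m hEm hhm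
    have hx2 : ∀ k ∈ Finset.Icc 1 m, |x m k| ≤ 1/2 := fun k hk => (hEm k hk).trans hhm
    constructor
    · calc (∑ k ∈ Finset.Icc 1 m, x m k) - 2 * ∑ k ∈ Finset.Icc 1 m, (x m k)^2
          = ∑ k ∈ Finset.Icc 1 m, (x m k - 2*(x m k)^2) := by
            rw [Finset.mul_sum, ← Finset.sum_sub_distrib]
        _ ≤ _ := Finset.sum_le_sum fun k hk => (log_bounds (hx2 k hk)).1
    · exact Finset.sum_le_sum fun k hk => (log_bounds (hx2 k hk)).2
  have hlow : Tendsto (fun m : ℕ => (∑ k ∈ Finset.Icc 1 m, x m k) - 2 * ∑ k ∈ Finset.Icc 1 m, (x m k)^2)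
      atTop (nhds (a + b/2)) := by
    have := hS.sub (hQ.const_mul 2)
    rw [mul_zero, sub_zero] at this
    exact this
  have hG : Tendsto (fun m : ℕ => ∑ k ∈ Finset.Icc 1 m, Real.log (1 + x m k)) atTop (nhds (a + b/2)) :=
    tendsto_of_tendsto_of_tendsto_of_le_of_le' hlow hS (hGb.mono fun m h => h.1) (hGb.mono fun m h => h.2)
  -- conclude
  have hpos : ∀ᶠ m : ℕ in atTop, ∀ k ∈ Finset.Icc 1 m, 0 < 1 + x m k := by
    filter_upwards [hE, hhalf] with m hEm hhm k hk
    have h5 : -(1/2 : ℝ) ≤ x m k := (abs_le.mp ((hEm k hk).trans hhm)).1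
    simp only [hx] at h5 ⊢
    linarith
  have hfeq : (fun m : ℕ => Real.exp (∑ k ∈ Finset.Icc 1 m, Real.log (1 + x m k))) =ᶠ[atTop]
      (fun m : ℕ => ∏ k ∈ Finset.Icc 1 m,
        (1 + a / m + b * k / (m : ℝ) ^ 2 + p₁.eval (k : ℝ) / p₂.eval (m : ℝ))) := by
    filter_upwards [hpos] with m hm
    have heq : ∀ k ∈ Finset.Icc 1 m,
        (1 + a / (m:ℝ) + b * k / (m:ℝ)^2 + p₁.eval (k:ℝ) / p₂.eval (m:ℝ)) = 1 + x m k := by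
      intro k hk; simp only [hx]; ring
    rw [Finset.prod_congr rfl heq, ← Real.exp_log (Finset.prod_pos hm), Real.log_prod]
    exact fun k hk => (hm k hk).ne'
  exact Tendsto.congr' hfeq ((Real.continuous_exp.tendsto _).comp hG)
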